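/- For the 2-dimensional compatible associative algebra with e₁•e₁ = e₂ and e₁*e₁ = e₁, e₁*e₂ = e₂, e₂*e₁ = e₂ (all other products zero), a linear map R is a Rota–Baxter operator (of weight 0) for both multiplications if and only if R(e₁) = r·e₂ for some r ∈ ℂ and R(e₂) = 0. -/

import Mathlib

/-- `e₁•e₁ = e₂`. -/
def bul2 (x y : Fin 2 → ℂ) : Fin 2 → ℂ := ![0, x 0 * y 0]

/-- `e₁*e₁ = e₁`, `e₁*e₂ = e₂`, `e₂*e₁ = e₂`. -/
def star2 (x y : Fin 2 → ℂ) : Fin 2 → ℂ := ![x 0 * y 0, x 0 * y 1 + x 1 * y 0]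

lemma vec_decomp (x : Fin 2 → ℂ) :
    x = x 0 • (Pi.single 0 1 : Fin 2 → ℂ) + x 1 • (Pi.single 1 1 : Fin 2 → ℂ) := by
  funext i
  fin_cases i <;> simp [Pi.single_apply]

/-- Rota–Baxter operators (weight 0) of the compatible pair `(𝒜₂¹, 𝒜₂⁴)`. -/
theorem rb_A21_A24 (R : (Fin 2 → ℂ) →ₗ[ℂ] (Fin 2 → ℂ)) :
    ((∀ a b : Fin 2 → ℂ, bul2 (R a) (R b) = R (bul2 (R a) b + bul2 a (R b))) ∧
     (∀ a b : Fin 2 → ℂ, star2 (R a) (R b) = R (star2 (R a) b + star2 a (R b)))) ↔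
    (∃ r : ℂ, R (Pi.single 0 1 : Fin 2 → ℂ) = r • (Pi.single 1 1 : Fin 2 → ℂ)) ∧
      R (Pi.single 1 1 : Fin 2 → ℂ) = 0 := by
  have hR : ∀ x : Fin 2 → ℂ, R x = x 0 • R (Pi.single 0 1) + x 1 • R (Pi.single 1 1) := by
    intro x
    conv_lhs => rw [vec_decomp x]
    simp
  set e1 : Fin 2 → ℂ := (Pi.single 0 1 : Fin 2 → ℂ) with he1
  set e2 : Fin 2 → ℂ := (Pi.single 1 1 : Fin 2 → ℂ) with he2
  set a := R e1 0 with ha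
  set b := R e1 1 with hb
  set c := R e2 0 with hc
  set d := R e2 1 with hd
  constructor
  · rintro ⟨h1, h2⟩
    -- c = 0 from bullet eq at (e1,e2), component 0
    have H2 := congrFun (h1 e1 e2) 0
    rw [hR (bul2 (R e1) e2 + bul2 e1 (R e2))] at H2
    simp [bul2, he1, he2, Pi.single_apply, ← ha, ← hb, ← hc, ← hd] at H2
    have hc0 : c = 0 := H2
    -- a = 0 from star eq at (e1,e1), component 0
    have H1 := congrFun (h2 e1 e1) 0
    rw [hR (star2 (R e1) e1 + star2 e1 (R e1))] at H1
    simp [star2, he1, he2, Pi.single_apply, ← ha, ← hb, ← hc, ← hd] at H1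
    have ha0 : a = 0 := by
      have h : a * a = 0 := by linear_combination -H1 - 2 * b * hc0
      exact mul_self_eq_zero.mp h
    -- d = 0 from star eq at (e1,e2), component 1
    have H3 := congrFun (h2 e1 e2) 1
    rw [hR (star2 (R e1) e2 + star2 e1 (R e2))] at H3
    simp [star2, he1, he2, Pi.single_apply, ← ha, ← hb, ← hc, ← hd] at H3
    have hd0 : d = 0 := by
      have h : d * d = 0 := by linear_combination -H3
      exact mul_self_eq_zero.mp h
    refine ⟨⟨b, ?_⟩, ?_⟩
    · funext i; fin_cases i <;>
        simp [he2, Pi.single_apply, ← ha, ← hb, ha0]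
    · funext i; fin_cases i <;>
        simp [← hc, ← hd, hc0, hd0]
  · rintro ⟨⟨r, hr⟩, h0⟩
    have hre1 : ∀ i, R e1 i = if i = 1 then r else 0 := by
      intro i; rw [hr]; fin_cases i <;> simp [he2, Pi.single_apply]
    have hre2 : ∀ i, R e2 i = 0 := by intro i; rw [h0]; rfl
    constructor <;> intro x y <;> funext i <;>
      · rw [hR x, hR y]
        rw [hR (_ + _)]
        simp only [bul2, star2, Pi.add_apply, Pi.smul_apply, smul_eq_mul]
        fin_cases i <;>
          simp [bul2, star2, hre1, hre2, Pi.single_apply]
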